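/- DAIM property 1 (monotone category fill): if μ' is the output of patient-proposing Deferred Acceptance with Initial Matching started from matching μ, then for every category c, the number of patients matched to c under μ' is at least the number matched to c under μ. -/
import Mathlib


open scoped Classical

variable {ι κ : Type*} [Fintype ι] [Fintype κ]

/-- Number of patients matched to category `c` under matching `μ`. -/
noncomputable def matchCount (μ : ι → Option κ) (c : κ) : ℕ :=
  (Finset.univ.filter fun i => μ i = some c).card

/-- Number of matched patients under `μ`. -/
noncomputable def matchedCard (μ : ι → Option κ) : ℕ :=
  (Finset.univ.filter fun i => μ i ≠ none).card

/-- Number of patients matched to a category of which they are a beneficiary. -/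
noncomputable def benefCard (B : κ → Finset ι) (μ : ι → Option κ) : ℕ :=
  (Finset.univ.filter fun i => ∃ c, μ i = some c ∧ i ∈ B c).card

/-- `μ` respects the capacity (reserve) of every category. -/
def Caps (r : κ → ℕ) (μ : ι → Option κ) : Prop :=
  ∀ c, matchCount μ c ≤ r c

/-- `μ` complies with eligibility requirements. -/
def Complies (E : κ → Finset ι) (μ : ι → Option κ) : Prop :=
  ∀ i c, μ i = some c → i ∈ E c

/-- `μ` is a feasible eligibility-complying matching. -/
def Valid (r : κ → ℕ) (E : κ → Finset ι) (μ : ι → Option κ) : Prop :=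
  Caps r μ ∧ Complies E μ

/-- `μ` is maximal in resource allocation. -/
def MaxRes (r : κ → ℕ) (E : κ → Finset ι) (μ : ι → Option κ) : Prop :=
  Valid r E μ ∧ ∀ μ', Valid r E μ' → matchedCard μ' ≤ matchedCard μ

/-- `μ` is max-in-max: maximal in resource allocation and maximizing beneficiary
assignments among such matchings. -/
def MaxInMax (r : κ → ℕ) (E B : κ → Finset ι) (μ : ι → Option κ) : Prop :=
  MaxRes r E μ ∧ ∀ μ', MaxRes r E μ' → benefCard B μ' ≤ benefCard B μ
/-- Eligible patients of category `c`: those strictly above the eligibility threshold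
`η c` in the priority order (encoded by the rank function `πr c`, lower rank = higher
priority). -/
noncomputable def Elig (πr : κ → ι → ℕ) (η : κ → ℕ) (c : κ) : Finset ι :=
  Finset.univ.filter fun i => πr c i < η c

/-- Beneficiaries of category `c`: those strictly above the beneficiary threshold. -/
noncomputable def Benef (πr : κ → ι → ℕ) (β : κ → ℕ) (c : κ) : Finset ι :=
  Finset.univ.filter fun i => πr c i < β c

/-- Preference rank of category `c` for patient `i` in the hypothetical market built
from the initial matching `μ` and the precedence order `prec`: a patient ranks first the
category she is initially matched to, and the remaining categories by precedence. -/
noncomputable def prank (prec : κ → ℕ) (μ : ι → Option κ) (i : ι) (c : κ) : ℕ :=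
  if μ i = some c then 0 else prec c + 1

/-- `μ'` is a stable matching of the hypothetical two-sided market associated with the
initial matching `μ`: it is feasible, individually rational, and admits no blocking
pair. -/
def Stable (r : κ → ℕ) (πr : κ → ι → ℕ) (η : κ → ℕ) (prec : κ → ℕ)
    (μ μ' : ι → Option κ) : Prop :=
  Caps r μ' ∧ Complies (Elig πr η) μ' ∧
  ¬ ∃ i c, i ∈ Elig πr η c ∧
      (μ' i = none ∨ ∃ c', μ' i = some c' ∧ prank prec μ i c < prank prec μ i c') ∧
      (matchCount μ' c < r c ∨ ∃ j, μ' j = some c ∧ πr c i < πr c j)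

/-- `μ'` is the output of patient-proposing Deferred Acceptance with Initial Matching
`μ`: the patient-optimal stable matching of the hypothetical market. -/
def DAIMOutput (r : κ → ℕ) (πr : κ → ι → ℕ) (η : κ → ℕ) (prec : κ → ℕ)
    (μ μ' : ι → Option κ) : Prop :=
  Stable r πr η prec μ μ' ∧
  ∀ μ'', Stable r πr η prec μ μ'' →
    ∀ i c₂, μ'' i = some c₂ →
      ∃ c₁, μ' i = some c₁ ∧ prank prec μ i c₁ ≤ prank prec μ i c₂
/-- DAIM property 1 (monotone category fill): the DAIM output matches at least as many
patients to each category as the initial matching. -/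
theorem daim_monotone_fill (r : κ → ℕ) (πr : κ → ι → ℕ) (η : κ → ℕ) (prec : κ → ℕ)
    (hprec : Function.Injective prec) (hπ : ∀ c, Function.Injective (πr c))
    (μ μ' : ι → Option κ) (hμ : Valid r (Elig πr η) μ)
    (hout : DAIMOutput r πr η prec μ μ') :
    ∀ c, matchCount μ c ≤ matchCount μ' c := by
  intro c
  by_cases hall : ∀ i, μ i = some c → μ' i = some c
  · unfold matchCount
    apply Finset.card_le_card
    intro i hi
    simp only [Finset.mem_filter, Finset.mem_univ, true_and] at hi ⊢
    exact hall i hi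
  · push_neg at hall
    obtain ⟨i, hic, hic'⟩ := hall
    -- i is eligible for c
    have helig : i ∈ Elig πr η c := hμ.2 i c hic
    -- i prefers c under the hypothetical preferences
    have hpref : μ' i = none ∨ ∃ c', μ' i = some c' ∧
        prank prec μ i c < prank prec μ i c' := by
      cases hcase : μ' i with
      | none => exact Or.inl rfl
      | some c' =>
        refine Or.inr ⟨c', rfl, ?_⟩
        have hne : c' ≠ c := by rintro rfl; exact hic' hcase
        have hμic' : μ i ≠ some c' := by
          rw [hic]; simp [hne.symm]
        simp [prank, hic, hne.symm]
    have hstab := hout.1.2.2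
    have hfull : ¬ (matchCount μ' c < r c ∨ ∃ j, μ' j = some c ∧ πr c i < πr c j) := by
      intro h
      exact hstab ⟨i, c, helig, hpref, h⟩
    push_neg at hfull
    calc matchCount μ c ≤ r c := hμ.1 c
      _ ≤ matchCount μ' c := hfull.1
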